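/- Let v : ℝ → ℝ be twice differentiable and satisfy v''(t) + v(t) − v(t)³ = 0 for all t ∈ ℝ, with v(t) → 1 as t → +∞ and v(t) → −1 as t → −∞. Then there exists c ∈ ℝ such that v(t) = tanh((t − c)/√2) for all t ∈ ℝ; that is, the heteroclinic solution is unique up to translations. -/

import Mathlib

open Filter Set

/-- Grönwall: forward vanishing. -/
lemma my_gron_forward (f : ℝ → ℝ) (hf : Differentiable ℝ f) (K : ℝ)
    (hb : ∀ t, |deriv f t| ≤ K * |f t|) {t₀ : ℝ} (h0 : f t₀ = 0) :
    ∀ t, t₀ ≤ t → f t = 0 := by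
  intro b hble
  have H := norm_le_gronwallBound_of_norm_deriv_right_le (f := f) (f' := deriv f)
    (δ := 0) (K := K) (ε := 0) (a := t₀) (b := b)
    hf.continuous.continuousOn
    (fun x _ => (hf x).hasDerivAt.hasDerivWithinAt)
    (by simp [h0])
    (fun x _ => by simpa [Real.norm_eq_abs] using hb x)
    b ⟨hble, le_refl b⟩
  rw [gronwallBound_ε0_δ0] at H
  simpa [Real.norm_eq_abs, abs_nonpos_iff] using H

/-- Grönwall: vanishing everywhere. -/
lemma my_gron_zero (f : ℝ → ℝ) (hf : Differentiable ℝ f) (K : ℝ)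
    (hb : ∀ t, |deriv f t| ≤ K * |f t|) {t₀ : ℝ} (h0 : f t₀ = 0) (t : ℝ) : f t = 0 := by
  rcases le_total t₀ t with h | h
  · exact my_gron_forward f hf K hb h0 t h
  · set g : ℝ → ℝ := fun s => f (2 * t₀ - s) with hg
    have hgd : Differentiable ℝ g := hf.comp (by fun_prop)
    have hdg : ∀ s, deriv g s = -deriv f (2 * t₀ - s) := by
      intro s
      have h1 : HasDerivAt (fun s : ℝ => 2 * t₀ - s) (-1) s := by
        simpa using (hasDerivAt_id s).const_sub (2 * t₀)
      have h2 : HasDerivAt g (deriv f (2 * t₀ - s) * (-1)) s :=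
        ((hf (2 * t₀ - s)).hasDerivAt.comp s h1)
      rw [h2.deriv]; ring
    have hbg : ∀ s, |deriv g s| ≤ K * |g s| := by
      intro s; rw [hdg, abs_neg]; exact hb (2 * t₀ - s)
    have hg0 : g t₀ = 0 := by simp [hg, two_mul, h0]
    have := my_gron_forward g hgd K hbg hg0 (2 * t₀ - t) (by linarith)
    simpa [hg, sub_sub_cancel] using this

/-- A continuous nonvanishing real function has constant sign. -/
lemma my_sign_const (f : ℝ → ℝ) (hf : Continuous f) (hne : ∀ t, f t ≠ 0) :
    (∀ t, 0 < f t) ∨ (∀ t, f t < 0) := by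
  rcases (hne 0).lt_or_gt with h0 | h0
  · right; intro t
    rcases (hne t).lt_or_gt with h | h
    · exact h
    · exfalso
      have hm : (0:ℝ) ∈ Set.uIcc (f 0) (f t) := Set.mem_uIcc.mpr (Or.inl ⟨h0.le, h.le⟩)
      obtain ⟨c, _, hc⟩ := intermediate_value_uIcc hf.continuousOn hm
      exact hne c hc
  · left; intro t
    rcases (hne t).lt_or_gt with h | h
    · exfalso
      have hm : (0:ℝ) ∈ Set.uIcc (f 0) (f t) := Set.mem_uIcc.mpr (Or.inr ⟨h.le, h0.le⟩)
      obtain ⟨c, _, hc⟩ := intermediate_value_uIcc hf.continuousOn hm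
      exact hne c hc
    · exact h

lemma my_tanh_hasDerivAt (x : ℝ) : HasDerivAt Real.tanh (1 - Real.tanh x ^ 2) x := by
  have h := (Real.hasDerivAt_sinh x).div (Real.hasDerivAt_cosh x) (Real.cosh_pos x).ne'
  have he : Real.tanh = fun x => Real.sinh x / Real.cosh x := by
    funext y; exact Real.tanh_eq_sinh_div_cosh y
  rw [he]
  refine h.congr_deriv ?_
  have h1 := Real.cosh_sq_sub_sinh_sq x
  have h2 := (Real.cosh_pos x).ne'
  field_simp

lemma my_tanh_lt_one (x : ℝ) : Real.tanh x < 1 := by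
  rw [Real.tanh_eq_sinh_div_cosh, div_lt_one (Real.cosh_pos x)]
  nlinarith [Real.cosh_sub_sinh x, Real.exp_pos (-x)]

lemma my_neg_one_lt_tanh (x : ℝ) : -1 < Real.tanh x := by
  rw [Real.tanh_eq_sinh_div_cosh, lt_div_iff₀ (Real.cosh_pos x)]
  nlinarith [Real.sinh_add_cosh x, Real.exp_pos x]

lemma my_tanh_surj {y : ℝ} (h1 : -1 < y) (h2 : y < 1) : ∃ x, Real.tanh x = y := by
  refine ⟨Real.log ((1 + y) / (1 - y)) / 2, ?_⟩
  have hy1 : (0:ℝ) < 1 + y := by linarith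
  have hy2 : (0:ℝ) < 1 - y := by linarith
  set x := Real.log ((1 + y) / (1 - y)) / 2 with hx
  have hE : Real.exp x ^ 2 = (1 + y) / (1 - y) := by
    rw [← Real.exp_nat_mul]
    · push_cast
      rw [hx]
      rw [show (2:ℝ) * (Real.log ((1 + y) / (1 - y)) / 2) = Real.log ((1 + y) / (1 - y)) by ring]
      exact Real.exp_log (div_pos hy1 hy2)
  have hEpos := Real.exp_pos x
  rw [Real.tanh_eq_sinh_div_cosh, Real.sinh_eq, Real.cosh_eq, Real.exp_neg]
  rw [div_eq_iff (by positivity)]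
  field_simp
  field_simp at hE
  nlinarith [hE, hEpos]
/-- Uniqueness up to translation of the heteroclinic solution of the 1D
Allen–Cahn equation: any twice differentiable `v` with `v'' + v - v³ = 0`,
`v → 1` at `+∞` and `v → -1` at `-∞` is a translate of `tanh (·/√2)`. -/
theorem stmt_1 (v : ℝ → ℝ)
    (hv1 : Differentiable ℝ v)
    (hv2 : Differentiable ℝ (deriv v))
    (heq : ∀ t : ℝ, deriv (deriv v) t + v t - (v t) ^ 3 = 0)
    (htop : Tendsto v atTop (nhds 1))
    (hbot : Tendsto v atBot (nhds (-1))) :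
    ∃ c : ℝ, ∀ t : ℝ, v t = Real.tanh ((t - c) / Real.sqrt 2) := by
  have hvc : Continuous v := hv1.continuous
  have hv'c : Continuous (deriv v) := hv2.continuous
  -- Energy is constant
  have hHconst : ∀ t, (deriv v t) ^ 2 / 2 + (v t) ^ 2 / 2 - (v t) ^ 4 / 4
      = (deriv v 0) ^ 2 / 2 + (v 0) ^ 2 / 2 - (v 0) ^ 4 / 4 := by
    have hHd : ∀ t, HasDerivAt (fun t => (deriv v t) ^ 2 / 2 + (v t) ^ 2 / 2 - (v t) ^ 4 / 4)
        0 t := by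
      intro t
      have h1 : HasDerivAt (deriv v) (deriv (deriv v) t) t := (hv2 t).hasDerivAt
      have h2 : HasDerivAt v (deriv v t) t := (hv1 t).hasDerivAt
      have h3 : HasDerivAt (fun t => (deriv v t) ^ 2 / 2 + (v t) ^ 2 / 2 - (v t) ^ 4 / 4)
          (2 * deriv v t ^ 1 * deriv (deriv v) t / 2
          + 2 * v t ^ 1 * deriv v t / 2 - 4 * v t ^ 3 * deriv v t / 4) t :=
        (((h1.pow 2).div_const 2).add ((h2.pow 2).div_const 2)).sub ((h2.pow 4).div_const 4)
      have h5 : 2 * deriv v t ^ 1 * deriv (deriv v) t / 2 + 2 * v t ^ 1 * deriv v t / 2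
          - 4 * v t ^ 3 * deriv v t / 4
          = deriv v t * (deriv (deriv v) t + v t - v t ^ 3) := by ring
      rw [h5, heq t, mul_zero] at h3
      exact h3
    exact fun t => is_const_of_deriv_eq_zero (fun s => (hHd s).differentiableAt)
      (fun s => (hHd s).deriv) t 0
  obtain ⟨L, key⟩ : ∃ L : ℝ, ∀ t, (deriv v t) ^ 2 = L + (1 - (v t) ^ 2) ^ 2 / 2 := by
    refine ⟨2 * ((deriv v 0) ^ 2 / 2 + (v 0) ^ 2 / 2 - (v 0) ^ 4 / 4) - 1 / 2, fun t => ?_⟩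
    nlinarith [hHconst t]
  -- L ≥ 0
  have hLtend : Tendsto (fun t => (deriv v t) ^ 2) atTop (nhds L) := by
    have h1 : Tendsto (fun t => L + (1 - (v t) ^ 2) ^ 2 / 2) atTop
        (nhds (L + (1 - (1:ℝ) ^ 2) ^ 2 / 2)) :=
      tendsto_const_nhds.add (((tendsto_const_nhds.sub (htop.pow 2)).pow 2).div_const 2)
    norm_num at h1
    exact h1.congr fun t => (key t).symm
  have hL0 : 0 ≤ L := ge_of_tendsto' hLtend fun t => sq_nonneg _
  -- L ≤ 0
  have hLle : L ≤ 0 := by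
    by_contra hL
    push_neg at hL
    have hne : ∀ t, deriv v t ≠ 0 := by
      intro t h
      have hk := key t
      rw [h] at hk
      nlinarith [sq_nonneg (1 - (v t) ^ 2)]
    have hsL : 0 < Real.sqrt L := Real.sqrt_pos.mpr hL
    obtain ⟨A, hA⟩ := eventually_atTop.mp
      ((htop.eventually (eventually_le_nhds (by norm_num : (1:ℝ) < 2))).and
       (htop.eventually (eventually_ge_nhds (by norm_num : (0:ℝ) < 1))))
    rcases my_sign_const (deriv v) hv'c hne with hp | hn
    · have hd : ∀ t, Real.sqrt L ≤ deriv v t := by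
        intro t
        calc Real.sqrt L ≤ Real.sqrt ((deriv v t) ^ 2) :=
              Real.sqrt_le_sqrt (by nlinarith [key t, sq_nonneg (1 - (v t) ^ 2)])
          _ = deriv v t := Real.sqrt_sq (hp t).le
      have hmono : Monotone (fun t => v t - Real.sqrt L * t) := by
        apply monotone_of_deriv_nonneg (hv1.sub (by fun_prop))
        intro t
        rw [deriv_sub (hv1 t) (by fun_prop)]
        have h6 : deriv (fun t : ℝ => Real.sqrt L * t) t = Real.sqrt L := by
          simpa using (HasDerivAt.const_mul (Real.sqrt L) (hasDerivAt_id t)).deriv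
        rw [h6]; linarith [hd t]
      have hT0 : (0:ℝ) ≤ max A (max 0 ((3 - v 0) / Real.sqrt L)) :=
        le_trans (le_max_left _ _) (le_max_right _ _)
      have h1 := hmono hT0
      simp only [mul_zero, sub_zero] at h1
      have h2 : (3 - v 0) / Real.sqrt L ≤ max A (max 0 ((3 - v 0) / Real.sqrt L)) :=
        le_trans (le_max_right _ _) (le_max_right _ _)
      have h3 : 3 - v 0 ≤ Real.sqrt L * max A (max 0 ((3 - v 0) / Real.sqrt L)) := by
        rw [← div_le_iff₀' hsL]; exact h2
      have h4 := (hA (max A (max 0 ((3 - v 0) / Real.sqrt L))) (le_max_left _ _)).1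
      linarith
    · have hd : ∀ t, deriv v t ≤ -Real.sqrt L := by
        intro t
        have h7 : Real.sqrt L ≤ -deriv v t := by
          calc Real.sqrt L ≤ Real.sqrt ((deriv v t) ^ 2) :=
                Real.sqrt_le_sqrt (by nlinarith [key t, sq_nonneg (1 - (v t) ^ 2)])
            _ = |deriv v t| := Real.sqrt_sq_eq_abs _
            _ = -deriv v t := abs_of_neg (hn t)
        linarith
      have hmono : Monotone (fun t => -v t - Real.sqrt L * t) := by
        apply monotone_of_deriv_nonneg (hv1.neg.sub (by fun_prop))
        intro t
        rw [deriv_sub (hv1.neg t) (by fun_prop), deriv.neg]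
        have h6 : deriv (fun t : ℝ => Real.sqrt L * t) t = Real.sqrt L := by
          simpa using (HasDerivAt.const_mul (Real.sqrt L) (hasDerivAt_id t)).deriv
        rw [h6]; linarith [hd t]
      have hT0 : (0:ℝ) ≤ max A (max 0 ((1 + v 0) / Real.sqrt L)) :=
        le_trans (le_max_left _ _) (le_max_right _ _)
      have h1 := hmono hT0
      simp only [mul_zero, sub_zero] at h1
      have h2 : (1 + v 0) / Real.sqrt L ≤ max A (max 0 ((1 + v 0) / Real.sqrt L)) :=
        le_trans (le_max_right _ _) (le_max_right _ _)
      have h3 : 1 + v 0 ≤ Real.sqrt L * max A (max 0 ((1 + v 0) / Real.sqrt L)) := by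
        rw [← div_le_iff₀' hsL]; exact h2
      have h4 := (hA (max A (max 0 ((1 + v 0) / Real.sqrt L))) (le_max_left _ _)).2
      linarith
  have hLeq : L = 0 := le_antisymm hLle hL0
  have key2 : ∀ t, (deriv v t) ^ 2 = (1 - (v t) ^ 2) ^ 2 / 2 := by
    intro t; have hk := key t; rw [hLeq] at hk; linarith
  clear key hLtend hL0 hLle hLeq hHconst
  -- v is globally bounded
  obtain ⟨M, hM0, hM⟩ : ∃ M : ℝ, 0 ≤ M ∧ ∀ t, |v t| ≤ M := by
    obtain ⟨A, hA⟩ := eventually_atTop.mp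
      (htop.abs.eventually (eventually_le_nhds (by norm_num : |(1:ℝ)| < 2)))
    obtain ⟨B, hB⟩ := eventually_atBot.mp
      (hbot.abs.eventually (eventually_le_nhds (by norm_num : |(-1:ℝ)| < 2)))
    obtain ⟨C, hC⟩ := (isCompact_Icc (a := B) (b := A)).exists_bound_of_continuousOn
      hvc.continuousOn
    refine ⟨max 2 (max C 0), by positivity, fun t => ?_⟩
    rcases le_total t B with h | h
    · exact le_trans (hB t h) (le_max_left _ _)
    rcases le_total A t with h' | h'
    · exact le_trans (hA t h') (le_max_left _ _)
    · exact le_trans (hC t ⟨h, h'⟩) (le_trans (le_max_left _ _) (le_max_right _ _))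
  -- 1 - v² never vanishes
  have hwne : ∀ t, 1 - (v t) ^ 2 ≠ 0 := by
    obtain ⟨w, hwdiff, hwderiv, hwval⟩ : ∃ w : ℝ → ℝ, Differentiable ℝ w ∧
        (∀ t, deriv w t = -(2 * v t * deriv v t)) ∧ ∀ t, w t = 1 - (v t) ^ 2 := by
      refine ⟨fun t => 1 - (v t) ^ 2, (differentiable_const 1).sub (hv1.pow 2), fun t => ?_,
        fun t => rfl⟩
      have h2 : HasDerivAt v (deriv v t) t := (hv1 t).hasDerivAt
      have h3 : HasDerivAt (fun t => 1 - (v t) ^ 2) (-(2 * v t ^ 1 * deriv v t)) t :=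
        (h2.pow 2).const_sub 1
      rw [h3.deriv]; ring
    have hwbound : ∀ t, |deriv w t| ≤ 2 * M * |w t| := by
      intro t
      have h1 : (deriv w t) ^ 2 ≤ (2 * M * |w t|) ^ 2 := by
        rw [hwderiv, hwval]
        have hv2le : (v t) ^ 2 ≤ M ^ 2 := by nlinarith [hM t, abs_nonneg (v t), sq_abs (v t)]
        nlinarith [key2 t, sq_abs (1 - (v t) ^ 2), sq_nonneg (1 - (v t) ^ 2),
          sq_nonneg (v t * deriv v t), sq_nonneg (deriv v t)]
      calc |deriv w t| = Real.sqrt ((deriv w t) ^ 2) := (Real.sqrt_sq_eq_abs _).symm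
        _ ≤ Real.sqrt ((2 * M * |w t|) ^ 2) := Real.sqrt_le_sqrt h1
        _ = 2 * M * |w t| := Real.sqrt_sq (by positivity)
    intro t₀ h0
    have h0' : w t₀ = 0 := by rw [hwval]; exact h0
    have hall := my_gron_zero w hwdiff (2 * M) hwbound h0'
    obtain ⟨a, ha⟩ : ∃ a, v a < 0 :=
      (hbot.eventually (eventually_lt_nhds (by norm_num : (-1:ℝ) < 0))).exists
    obtain ⟨b, hb⟩ : ∃ b, 0 < v b :=
      (htop.eventually (eventually_gt_nhds (by norm_num : (0:ℝ) < 1))).exists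
    have hm : (0:ℝ) ∈ Set.uIcc (v a) (v b) := Set.mem_uIcc.mpr (Or.inl ⟨ha.le, hb.le⟩)
    obtain ⟨c, _, hc⟩ := intermediate_value_uIcc hvc.continuousOn hm
    have hcc := hall c
    rw [hwval, hc] at hcc
    norm_num at hcc
  -- |v| < 1 everywhere
  have hvlt : ∀ t, (v t) ^ 2 < 1 := by
    intro t
    rcases lt_or_ge ((v t) ^ 2) 1 with h | h
    · exact h
    exfalso
    have h1 : 1 < (v t) ^ 2 := lt_of_le_of_ne h (by intro h'; exact hwne t (by rw [← h']; ring))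
    rcases le_or_gt (v t) 0 with hv0 | hv0
    · have hlt : v t < -1 := by nlinarith
      obtain ⟨b, hb⟩ : ∃ b, 0 < v b :=
        (htop.eventually (eventually_gt_nhds (by norm_num : (0:ℝ) < 1))).exists
      have hm : (-1:ℝ) ∈ Set.uIcc (v t) (v b) := Set.mem_uIcc.mpr (Or.inl ⟨hlt.le, by linarith⟩)
      obtain ⟨c, _, hc⟩ := intermediate_value_uIcc hvc.continuousOn hm
      exact hwne c (by rw [hc]; norm_num)
    · have hlt : 1 < v t := by nlinarith
      obtain ⟨a, ha⟩ : ∃ a, v a < 0 :=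
        (hbot.eventually (eventually_lt_nhds (by norm_num : (-1:ℝ) < 0))).exists
      have hm : (1:ℝ) ∈ Set.uIcc (v a) (v t) := Set.mem_uIcc.mpr (Or.inl ⟨by linarith, hlt.le⟩)
      obtain ⟨c, _, hc⟩ := intermediate_value_uIcc hvc.continuousOn hm
      exact hwne c (by rw [hc]; norm_num)
  -- v' is positive everywhere
  have hpos : ∀ t, 0 < deriv v t := by
    have hv'ne : ∀ t, deriv v t ≠ 0 := by
      intro t h
      have h1 := key2 t
      rw [h] at h1
      nlinarith [hvlt t]
    rcases my_sign_const (deriv v) hv'c hv'ne with hp | hn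
    · exact hp
    exfalso
    obtain ⟨a, ha⟩ : ∃ a, v a < 0 :=
      (hbot.eventually (eventually_lt_nhds (by norm_num : (-1:ℝ) < 0))).exists
    obtain ⟨b, hb1, hb2⟩ : ∃ b, a < b ∧ 0 < v b := by
      have h1 : ∀ᶠ t in atTop, 0 < v t := htop.eventually (eventually_gt_nhds (by norm_num))
      have h2 : ∀ᶠ t : ℝ in atTop, a < t := eventually_gt_atTop a
      obtain ⟨b, hb1, hb2⟩ := (h2.and h1).exists
      exact ⟨b, hb1, hb2⟩
    obtain ⟨ξ, _, hξ⟩ := exists_deriv_eq_slope v hb1 hvc.continuousOn hv1.differentiableOn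
    have h3 : 0 < deriv v ξ := by rw [hξ]; exact div_pos (by linarith) (by linarith)
    linarith [hn ξ]
  -- first-order ODE
  have hs2 : (0:ℝ) < Real.sqrt 2 := by positivity
  have hsq2 : (Real.sqrt 2) ^ 2 = 2 := Real.sq_sqrt (by norm_num)
  have hode : ∀ t, deriv v t = (1 - (v t) ^ 2) / Real.sqrt 2 := by
    intro t
    have h1 : 0 < 1 - (v t) ^ 2 := by linarith [hvlt t]
    have h2 : (deriv v t) ^ 2 = ((1 - (v t) ^ 2) / Real.sqrt 2) ^ 2 := by
      rw [div_pow, hsq2]; exact key2 t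
    calc deriv v t = Real.sqrt ((deriv v t) ^ 2) := (Real.sqrt_sq (hpos t).le).symm
      _ = Real.sqrt (((1 - (v t) ^ 2) / Real.sqrt 2) ^ 2) := by rw [h2]
      _ = (1 - (v t) ^ 2) / Real.sqrt 2 := Real.sqrt_sq (div_pos h1 hs2).le
  -- choose the translation
  obtain ⟨x₀, hx₀⟩ : ∃ x₀, Real.tanh x₀ = v 0 :=
    my_tanh_surj (by nlinarith [hvlt 0]) (by nlinarith [hvlt 0])
  refine ⟨-(Real.sqrt 2 * x₀), fun t => ?_⟩
  obtain ⟨W, hWdiff, hWderiv, hWval⟩ : ∃ W : ℝ → ℝ, Differentiable ℝ W ∧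
      (∀ t, deriv W t = (1 - W t ^ 2) / Real.sqrt 2) ∧
      ∀ t, W t = Real.tanh ((t - -(Real.sqrt 2 * x₀)) / Real.sqrt 2) := by
    refine ⟨fun t => Real.tanh ((t - -(Real.sqrt 2 * x₀)) / Real.sqrt 2), ?_, ?_, fun t => rfl⟩
    all_goals
      have hWd : ∀ s : ℝ, HasDerivAt
          (fun t : ℝ => Real.tanh ((t - -(Real.sqrt 2 * x₀)) / Real.sqrt 2))
          ((1 - Real.tanh ((s - -(Real.sqrt 2 * x₀)) / Real.sqrt 2) ^ 2) / Real.sqrt 2) s := by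
        intro s
        have hin : HasDerivAt (fun t : ℝ => (t - -(Real.sqrt 2 * x₀)) / Real.sqrt 2)
            (1 / Real.sqrt 2) s := ((hasDerivAt_id s).sub_const _).div_const _
        have h := (my_tanh_hasDerivAt ((s - -(Real.sqrt 2 * x₀)) / Real.sqrt 2)).comp s hin
        refine h.congr_deriv ?_
        ring
    · exact fun s => (hWd s).differentiableAt
    · exact fun s => (hWd s).deriv
  have hW0 : W 0 = v 0 := by
    rw [hWval]
    rw [show (0 - -(Real.sqrt 2 * x₀)) / Real.sqrt 2 = x₀ by field_simp; ring]
    exact hx₀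
  have hWb : ∀ t, W t ^ 2 < 1 := by
    intro t
    have h1 := my_tanh_lt_one ((t - -(Real.sqrt 2 * x₀)) / Real.sqrt 2)
    have h2 := my_neg_one_lt_tanh ((t - -(Real.sqrt 2 * x₀)) / Real.sqrt 2)
    rw [hWval]; nlinarith
  -- the difference satisfies a Grönwall estimate
  obtain ⟨d, hddiff, hdderiv, hdval⟩ : ∃ d : ℝ → ℝ, Differentiable ℝ d ∧
      (∀ t, deriv d t = (W t ^ 2 - (v t) ^ 2) / Real.sqrt 2) ∧ ∀ t, d t = v t - W t := by
    refine ⟨fun t => v t - W t, hv1.sub hWdiff, fun t => ?_, fun t => rfl⟩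
    rw [deriv_fun_sub (hv1 t) (hWdiff t), hode t, hWderiv t]
    ring
  have hdbound : ∀ t, |deriv d t| ≤ 2 * |d t| := by
    intro t
    have h1 : (deriv d t) ^ 2 ≤ (2 * |d t|) ^ 2 := by
      rw [hdderiv, div_pow, hsq2, hdval]
      have h2 := hvlt t
      have h3 := hWb t
      have h4 : (W t ^ 2 - v t ^ 2) ^ 2 = (W t + v t) ^ 2 * (v t - W t) ^ 2 := by ring
      rw [h4]
      have h5 : (W t + v t) ^ 2 ≤ 4 := by nlinarith [sq_nonneg (W t - v t)]
      nlinarith [sq_abs (v t - W t), sq_nonneg (v t - W t)]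
    calc |deriv d t| = Real.sqrt ((deriv d t) ^ 2) := (Real.sqrt_sq_eq_abs _).symm
      _ ≤ Real.sqrt ((2 * |d t|) ^ 2) := Real.sqrt_le_sqrt h1
      _ = 2 * |d t| := Real.sqrt_sq (by positivity)
  have hd0 : d 0 = 0 := by rw [hdval, hW0]; ring
  have hfin := my_gron_zero d hddiff 2 hdbound hd0 t
  rw [hdval] at hfin
  rw [← hWval]
  linarith [hfin]
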